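/- With F_ρ as above (dim X_a ≥ 2, Im z ≠ 0), the map F_ρ : X_a → ℂ ≅ ℝ² has surjective differential at ξ unless ξ_⊥ = −ρ_⊥, where ξ_⊥ is the component of ξ orthogonal to ν. Equivalently, d(Im F_ρ) and d(Re F_ρ) are linearly independent at ξ iff ξ_⊥ ≠ −ρ_⊥. -/

import Mathlib

open RealInnerProductSpace

/-- With `dim X_a = m ≥ 2` and `Im z ≠ 0`, the map `F_ρ : X_a → ℂ ≅ ℝ²` has
surjective differential at `ξ` iff `ξ⊥ ≠ −ρ⊥`, where `ξ⊥ = ξ − (ν·ξ)ν`. -/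
theorem stmt7 (m : ℕ) (hm : 2 ≤ m) (ε : ℝ) (ν ρp : EuclideanSpace ℝ (Fin m)) (z : ℂ)
    (hν : ‖ν‖ = 1) (horth : ⟪ν, ρp⟫ = 0) (hz : z.im ≠ 0)
    (F : EuclideanSpace ℝ (Fin m) → ℂ)
    (hF : ∀ ξ, F ξ = (ε : ℂ) - ((‖ξ‖ ^ 2 : ℝ) : ℂ) -
      2 * (z * ((⟪ν, ξ⟫ : ℝ) : ℂ) + ((⟪ρp, ξ⟫ : ℝ) : ℂ)))
    (ξ : EuclideanSpace ℝ (Fin m)) :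
    Function.Surjective (fderiv ℝ F ξ) ↔ ξ - ⟪ν, ξ⟫ • ν ≠ -ρp := by
  have hFeq : F = fun x => (ε : ℂ) - ((‖x‖ ^ 2 : ℝ) : ℂ) -
      2 * (z * ((⟪ν, x⟫ : ℝ) : ℂ) + ((⟪ρp, x⟫ : ℝ) : ℂ)) := funext hF
  set c : ℝ := ⟪ν, ξ⟫ with hc
  set L : EuclideanSpace ℝ (Fin m) →L[ℝ] ℂ :=
    (-(2:ℂ)) • (Complex.ofRealCLM.comp (innerSL ℝ ξ)) -
    (2*z) • (Complex.ofRealCLM.comp (innerSL ℝ ν)) -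
    (2:ℂ) • (Complex.ofRealCLM.comp (innerSL ℝ ρp)) with hLdef
  have hLapp : ∀ h, L h = -2*((⟪ξ,h⟫:ℝ):ℂ) - 2*z*((⟪ν,h⟫:ℝ):ℂ) - 2*((⟪ρp,h⟫:ℝ):ℂ) := by
    intro h
    simp [hLdef]
  have h1 : HasFDerivAt (fun x : EuclideanSpace ℝ (Fin m) => ((‖x‖^2 : ℝ):ℂ))
      (Complex.ofRealCLM.comp (2 • innerSL ℝ ξ)) ξ :=
    Complex.ofRealCLM.hasFDerivAt.comp ξ (hasStrictFDerivAt_norm_sq ξ).hasFDerivAt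
  have h2 : HasFDerivAt (fun x : EuclideanSpace ℝ (Fin m) => ((⟪ν,x⟫:ℝ):ℂ))
      (Complex.ofRealCLM.comp (innerSL ℝ ν)) ξ :=
    Complex.ofRealCLM.hasFDerivAt.comp ξ (innerSL ℝ ν).hasFDerivAt
  have h3 : HasFDerivAt (fun x : EuclideanSpace ℝ (Fin m) => ((⟪ρp,x⟫:ℝ):ℂ))
      (Complex.ofRealCLM.comp (innerSL ℝ ρp)) ξ :=
    Complex.ofRealCLM.hasFDerivAt.comp ξ (innerSL ℝ ρp).hasFDerivAt
  have hL : HasFDerivAt F L ξ := by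
    rw [hFeq]
    have := (h1.const_sub (ε:ℂ)).sub (((h2.const_mul z).add h3).const_mul 2)
    refine this.congr_fderiv ?_
    ext h
    simp [hLdef]
    ring
  rw [hL.fderiv]
  constructor
  · intro hs
    by_contra heq
    have hξ : ξ = c • ν - ρp := by
      rw [eq_sub_iff_add_eq, ← eq_sub_iff_add_eq']
      linear_combination (norm := module) heq
    have ha : ((-2)*((c:ℂ)+z)) ≠ 0 := by
      intro h0
      apply hz
      have := congrArg Complex.im h0
      simpa using this
    obtain ⟨h, hh⟩ := hs (((-2)*((c:ℂ)+z)) * Complex.I)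
    have hval : L h = ((-2)*((c:ℂ)+z)) * ((⟪ν,h⟫:ℝ):ℂ) := by
      rw [hLapp]
      have hξh : (⟪ξ,h⟫:ℝ) = c * ⟪ν,h⟫ - ⟪ρp,h⟫ := by
        rw [hξ, inner_sub_left, real_inner_smul_left]
      rw [hξh]
      push_cast
      ring
    have hI : ((⟪ν,h⟫:ℝ):ℂ) = Complex.I := by
      apply mul_left_cancel₀ ha
      rw [← hval, hh]
    have := congrArg Complex.im hI
    simp at this
  · intro hne u
    set w := ξ - c • ν + ρp with hwdef
    have hw : w ≠ 0 := by
      intro h0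
      apply hne
      rw [← sub_eq_zero]
      linear_combination (norm := module) h0
    have hνw : (⟪ν,w⟫:ℝ) = 0 := by
      rw [hwdef, inner_add_right, inner_sub_right, real_inner_smul_right,
        real_inner_self_eq_norm_sq, hν, horth]
      simp [hc]
    have hLν : L ν = -2*(c:ℂ) - 2*z := by
      rw [hLapp]
      have h1 : (⟪ξ,ν⟫:ℝ) = c := real_inner_comm ν ξ
      have h2 : (⟪ν,ν⟫:ℝ) = 1 := by
        rw [real_inner_self_eq_norm_sq, hν]; norm_num
      have h3 : (⟪ρp,ν⟫:ℝ) = 0 := by rw [real_inner_comm]; exact horth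
      rw [h1, h2, h3]
      push_cast
      ring
    have hξw : ξ = w + c • ν - ρp := by
      rw [hwdef]; abel
    have hLw : L w = ((-2*‖w‖^2 : ℝ):ℂ) := by
      rw [hLapp]
      have h1 : (⟪ξ,w⟫:ℝ) = ‖w‖^2 + c * ⟪ν,w⟫ - ⟪ρp,w⟫ := by
        rw [hξw, inner_sub_left, inner_add_left, real_inner_smul_left,
          real_inner_self_eq_norm_sq]
      rw [h1, hνw]
      push_cast
      ring
    have haw : (-2*‖w‖^2 : ℝ) ≠ 0 := by
      have : ‖w‖ ≠ 0 := norm_ne_zero_iff.mpr hw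
      positivity
    have hzim : (-2 * z.im : ℝ) ≠ 0 := by simpa using hz
    set t : ℝ := u.im / (-2*z.im) with ht
    set s : ℝ := (u.re - t*(-2*c - 2*z.re))/(-2*‖w‖^2) with hs
    refine ⟨s • w + t • ν, ?_⟩
    rw [map_add, map_smul, map_smul, hLw, hLν]
    have hssR : s * (-2*‖w‖^2) = u.re - t*(-2*c - 2*z.re) := by
      rw [hs]; exact div_mul_cancel₀ _ haw
    have htsR : t * (-2*z.im) = u.im := by
      rw [ht]; exact div_mul_cancel₀ _ hzim
    have hzC : z = (z.re:ℂ) + (z.im:ℂ)*Complex.I := (Complex.re_add_im z).symm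
    have huC : u = (u.re:ℂ) + (u.im:ℂ)*Complex.I := (Complex.re_add_im u).symm
    have hssC : (s:ℂ) * (-2*(‖w‖:ℂ)^2) = (u.re:ℂ) - (t:ℂ)*(-2*(c:ℂ) - 2*(z.re:ℂ)) := by
      exact_mod_cast hssR
    have htsC : (t:ℂ) * (-2*(z.im:ℂ)) = (u.im:ℂ) := by exact_mod_cast htsR
    simp only [Complex.real_smul]
    push_cast
    linear_combination hssC + Complex.I * htsC - 2*(t:ℂ)*hzC - huC
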